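/- In the root system of type D_n, for a non-simple positive root γ, the number of unordered pairs {α, β} of positive roots with α + β = γ equals |Supp_{≥1}(γ)| - 1 + |Supp_{≥2}(γ)|, where Supp_{≥k}(γ) = { i : n_i ≥ k } for γ = Σ_i n_i α_i. -/

import Mathlib

open Finset

/-- Standard basis vector `ε_i` (1-indexed) in the ambient space `ℕ → ℤ`. -/
noncomputable def epsD (i : ℕ) : ℕ → ℤ := Pi.single i 1

/-- Simple roots of type `D_n` (1-indexed). -/
noncomputable def alphaD (n i : ℕ) : ℕ → ℤ :=
  if i = n then epsD (n - 1) + epsD n else epsD i - epsD (i + 1)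

/-- Positive roots of type `D_n`: `ε_i ± ε_j` for `1 ≤ i < j ≤ n`. -/
def IsPosRootD (n : ℕ) (v : ℕ → ℤ) : Prop :=
  ∃ i j : ℕ, 1 ≤ i ∧ i < j ∧ j ≤ n ∧ (v = epsD i - epsD j ∨ v = epsD i + epsD j)

lemma epsD_apply (i t : ℕ) : epsD i t = if t = i then 1 else 0 := by
  simp [epsD, Pi.single_apply]

lemma sum_map_epsD_apply (m : Multiset ℕ) (a : ℕ) :
    (m.map epsD).sum a = (m.count a : ℤ) := by
  induction m using Multiset.induction_on with
  | empty => simp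
  | cons b m ih =>
      simp only [Multiset.map_cons, Multiset.sum_cons, Pi.add_apply, ih,
        Multiset.count_cons, epsD_apply]
      split_ifs <;> push_cast <;> ring

lemma epsSum_inj {m1 m2 : Multiset ℕ} (h : (m1.map epsD).sum = (m2.map epsD).sum) :
    m1 = m2 := by
  ext a
  have := congrFun h a
  rw [sum_map_epsD_apply, sum_map_epsD_apply] at this
  exact_mod_cast this

lemma eps33 {x y z u v w : ℕ} (h : epsD x + epsD y + epsD z = epsD u + epsD v + epsD w) :
    ({x, y, z} : Multiset ℕ) = {u, v, w} := by
  apply epsSum_inj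
  simpa [Multiset.insert_eq_cons, add_assoc] using h

lemma eps42 {x y z w u v : ℕ}
    (h : epsD x + epsD y + epsD z + epsD w = epsD u + epsD v) : False := by
  have h2 : ({x, y, z, w} : Multiset ℕ) = {u, v} := by
    apply epsSum_inj
    simpa [Multiset.insert_eq_cons, add_assoc] using h
  simpa using congrArg Multiset.card h2

lemma eps51 {x y z w s u : ℕ}
    (h : epsD x + epsD y + epsD z + epsD w + epsD s = epsD u) : False := by
  have h2 : ({x, y, z, w, s} : Multiset ℕ) = {u} := by
    apply epsSum_inj
    simpa [Multiset.insert_eq_cons, add_assoc] using h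
  simpa using congrArg Multiset.card h2

lemma pair_eq {p b j q : ℕ} (h : ({p, b} : Multiset ℕ) = {j, q}) :
    (p = j ∧ b = q) ∨ (p = q ∧ b = j) := by
  have hp : p ∈ ({j, q} : Multiset ℕ) := h ▸ (by simp)
  simp only [Multiset.insert_eq_cons, Multiset.mem_cons, Multiset.mem_singleton] at hp
  rcases hp with rfl | rfl
  · left
    have := (Multiset.cons_inj_right p).mp h
    constructor
    · rfl
    · simpa using this
  · right
    rw [Multiset.pair_comm j p] at h
    have := (Multiset.cons_inj_right p).mp h
    constructor
    · rfl
    · simpa using this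

lemma classify_minus {n a b : ℕ} (hab : a < b) {α β : ℕ → ℤ}
    (hα : IsPosRootD n α) (hβ : IsPosRootD n β) (h : α + β = epsD a - epsD b) :
    ∃ k, a < k ∧ k < b ∧
      ((α = epsD a - epsD k ∧ β = epsD k - epsD b) ∨
       (α = epsD k - epsD b ∧ β = epsD a - epsD k)) := by
  obtain ⟨i, j, hi1, hij, hjn, hα'⟩ := hα
  obtain ⟨p, q, hp1, hpq, hqn, hβ'⟩ := hβ
  rcases hα' with rfl | rfl <;> rcases hβ' with rfl | rfl
  · -- (−,−)
    have key : epsD i + epsD p + epsD b = epsD a + epsD j + epsD q := by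
      funext t
      have := congrFun h t
      simp only [Pi.add_apply, Pi.sub_apply] at this ⊢
      linarith
    have hm := eps33 key
    have hamem : a ∈ ({i, p, b} : Multiset ℕ) := by rw [hm]; simp
    simp only [Multiset.insert_eq_cons, Multiset.mem_cons, Multiset.mem_singleton] at hamem
    rcases hamem with rfl | rfl | rfl
    · -- i := a
      have hm' : ({p, b} : Multiset ℕ) = {j, q} :=
        (Multiset.cons_inj_right a).mp hm
      rcases pair_eq hm' with ⟨rfl, rfl⟩ | ⟨rfl, rfl⟩
      · exact ⟨p, hij, hpq, Or.inl ⟨rfl, rfl⟩⟩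
      · omega
    · -- p := a
      have hswap : ({i, a, b} : Multiset ℕ) = ({a, i, b} : Multiset ℕ) := by
        simp only [Multiset.insert_eq_cons]
        exact Multiset.cons_swap i a {b}
      have hm' : ({i, b} : Multiset ℕ) = {j, q} :=
        (Multiset.cons_inj_right a).mp (hswap.symm.trans hm)
      rcases pair_eq hm' with ⟨rfl, rfl⟩ | ⟨rfl, rfl⟩
      · omega
      · exact ⟨i, hpq, hij, Or.inr ⟨rfl, rfl⟩⟩
    · omega
  · have key : epsD i + epsD p + epsD q + epsD b = epsD a + epsD j := by
      funext t
      have := congrFun h t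
      simp only [Pi.add_apply, Pi.sub_apply] at this ⊢
      linarith
    exact absurd key (fun k => eps42 k)
  · have key : epsD i + epsD j + epsD p + epsD b = epsD a + epsD q := by
      funext t
      have := congrFun h t
      simp only [Pi.add_apply, Pi.sub_apply] at this ⊢
      linarith
    exact absurd key (fun k => eps42 k)
  · have key : epsD i + epsD j + epsD p + epsD q + epsD b = epsD a := by
      funext t
      have := congrFun h t
      simp only [Pi.add_apply, Pi.sub_apply] at this ⊢
      linarith
    exact absurd key (fun k => eps51 k)

lemma mixed_plus {n a b i j p q : ℕ} (hab : a < b) (hij : i < j) (hjn : j ≤ n)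
    (hpq : p < q) (hqn : q ≤ n)
    (h : (epsD i - epsD j) + (epsD p + epsD q) = epsD a + epsD b) :
    (∃ k, a < k ∧ k ≤ n ∧ k ≠ b ∧
        epsD i - epsD j = epsD a - epsD k ∧ epsD p + epsD q = epsD k + epsD b)
    ∨ (∃ k, b < k ∧ k ≤ n ∧
        epsD i - epsD j = epsD b - epsD k ∧ epsD p + epsD q = epsD a + epsD k) := by
  have key : epsD i + epsD p + epsD q = epsD a + epsD b + epsD j := by
    funext t
    have := congrFun h t
    simp only [Pi.add_apply, Pi.sub_apply] at this ⊢
    linarith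
  have hm := eps33 key
  have himem : i ∈ ({a, b, j} : Multiset ℕ) := by rw [← hm]; simp
  simp only [Multiset.insert_eq_cons, Multiset.mem_cons, Multiset.mem_singleton] at himem
  rcases himem with rfl | rfl | rfl
  · -- a := i
    have hm' : ({p, q} : Multiset ℕ) = {b, j} :=
      (Multiset.cons_inj_right i).mp hm
    rcases pair_eq hm' with ⟨rfl, rfl⟩ | ⟨rfl, rfl⟩
    · exact Or.inl ⟨q, hij, hjn, by omega, rfl, add_comm _ _⟩
    · exact Or.inl ⟨p, hij, hjn, by omega, rfl, rfl⟩
  · -- b := i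
    have hswap : ({a, i, j} : Multiset ℕ) = ({i, a, j} : Multiset ℕ) := by
      simp only [Multiset.insert_eq_cons]
      exact Multiset.cons_swap a i {j}
    have hm' : ({p, q} : Multiset ℕ) = {a, j} :=
      (Multiset.cons_inj_right i).mp (hm.trans hswap)
    rcases pair_eq hm' with ⟨rfl, rfl⟩ | ⟨rfl, rfl⟩
    · exact Or.inr ⟨q, hij, hjn, rfl, rfl⟩
    · omega
  · omega

lemma classify_plus {n a b : ℕ} (hab : a < b) {α β : ℕ → ℤ}
    (hα : IsPosRootD n α) (hβ : IsPosRootD n β) (h : α + β = epsD a + epsD b) :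
    (∃ k, a < k ∧ k ≤ n ∧ k ≠ b ∧
      ((α = epsD a - epsD k ∧ β = epsD k + epsD b) ∨
       (α = epsD k + epsD b ∧ β = epsD a - epsD k)))
    ∨ (∃ k, b < k ∧ k ≤ n ∧
      ((α = epsD b - epsD k ∧ β = epsD a + epsD k) ∨
       (α = epsD a + epsD k ∧ β = epsD b - epsD k))) := by
  obtain ⟨i, j, hi1, hij, hjn, hα'⟩ := hα
  obtain ⟨p, q, hp1, hpq, hqn, hβ'⟩ := hβ
  rcases hα' with rfl | rfl <;> rcases hβ' with rfl | rfl
  · -- (−,−)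
    have key : epsD a + epsD b + epsD j + epsD q = epsD i + epsD p := by
      funext t
      have := congrFun h t
      simp only [Pi.add_apply, Pi.sub_apply] at this ⊢
      linarith
    exact absurd key (fun k => eps42 k)
  · -- (−,+)
    rcases mixed_plus hab hij hjn hpq hqn h with ⟨k, h1, h2, h3, h4, h5⟩ | ⟨k, h1, h2, h4, h5⟩
    · exact Or.inl ⟨k, h1, h2, h3, Or.inl ⟨h4, h5⟩⟩
    · exact Or.inr ⟨k, h1, h2, Or.inl ⟨h4, h5⟩⟩
  · -- (+,−)
    rw [add_comm] at h
    rcases mixed_plus hab hpq hqn hij hjn h with ⟨k, h1, h2, h3, h4, h5⟩ | ⟨k, h1, h2, h4, h5⟩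
    · exact Or.inl ⟨k, h1, h2, h3, Or.inr ⟨h5, h4⟩⟩
    · exact Or.inr ⟨k, h1, h2, Or.inr ⟨h5, h4⟩⟩
  · -- (+,+)
    have key : epsD i + epsD j + epsD p + epsD q = epsD a + epsD b := by
      funext t
      have := congrFun h t
      simp only [Pi.add_apply, Pi.sub_apply] at this ⊢
      linarith
    exact absurd key (fun k => eps42 k)

open Classical in
lemma count_minus {n a b : ℕ} (ha : 1 ≤ a) (hab : a < b) (hbn : b ≤ n) :
    {p : Sym2 (ℕ → ℤ) | ∃ α β : ℕ → ℤ, p = s(α, β) ∧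
        IsPosRootD n α ∧ IsPosRootD n β ∧ α + β = epsD a - epsD b}.ncard
      = b - a - 1 := by
  have hset : {p : Sym2 (ℕ → ℤ) | ∃ α β : ℕ → ℤ, p = s(α, β) ∧
        IsPosRootD n α ∧ IsPosRootD n β ∧ α + β = epsD a - epsD b}
      = ↑((Finset.Ioo a b).image (fun k => s(epsD a - epsD k, epsD k - epsD b))) := by
    ext P
    simp only [Set.mem_setOf_eq, Finset.coe_image, Set.mem_image, Finset.mem_coe,
      Finset.mem_Ioo]
    constructor
    · rintro ⟨α, β, rfl, hα, hβ, hsum⟩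
      obtain ⟨k, hk1, hk2, hcase⟩ := classify_minus hab hα hβ hsum
      refine ⟨k, ⟨hk1, hk2⟩, ?_⟩
      rcases hcase with ⟨rfl, rfl⟩ | ⟨rfl, rfl⟩
      · rfl
      · exact Sym2.eq_swap
    · rintro ⟨k, ⟨hk1, hk2⟩, rfl⟩
      refine ⟨_, _, rfl, ⟨a, k, ha, hk1, by omega, Or.inl rfl⟩,
        ⟨k, b, by omega, hk2, hbn, Or.inl rfl⟩, by abel⟩
  rw [hset, Set.ncard_coe_finset]
  rw [Finset.card_image_of_injOn, Nat.card_Ioo]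
  intro k hk k' hk' h
  simp only [Finset.coe_Ioo, Set.mem_Ioo] at hk hk'
  rw [Sym2.eq_iff] at h
  rcases h with ⟨h1, -⟩ | ⟨h1, -⟩
  · have := congrFun h1 k
    simp only [Pi.sub_apply, epsD_apply] at this
    split_ifs at this <;> omega
  · have := congrFun h1 a
    simp only [Pi.sub_apply, epsD_apply] at this
    split_ifs at this <;> omega

open Classical in
lemma count_plus {n a b : ℕ} (ha : 1 ≤ a) (hab : a < b) (hbn : b ≤ n) :
    {p : Sym2 (ℕ → ℤ) | ∃ α β : ℕ → ℤ, p = s(α, β) ∧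
        IsPosRootD n α ∧ IsPosRootD n β ∧ α + β = epsD a + epsD b}.ncard
      = (n - a - 1) + (n - b) := by
  have hset : {p : Sym2 (ℕ → ℤ) | ∃ α β : ℕ → ℤ, p = s(α, β) ∧
        IsPosRootD n α ∧ IsPosRootD n β ∧ α + β = epsD a + epsD b}
      = ↑((((Finset.Ioc a n).erase b).image
            (fun k => s(epsD a - epsD k, epsD k + epsD b)))
          ∪ ((Finset.Ioc b n).image
            (fun k => s(epsD b - epsD k, epsD a + epsD k)))) := by
    ext P
    simp only [Set.mem_setOf_eq, Finset.coe_union, Set.mem_union, Finset.coe_image,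
      Set.mem_image, Finset.mem_coe, Finset.mem_erase, Finset.mem_Ioc]
    constructor
    · rintro ⟨α, β, rfl, hα, hβ, hsum⟩
      rcases classify_plus hab hα hβ hsum with
        ⟨k, h1, h2, h3, hcase⟩ | ⟨k, h1, h2, hcase⟩
      · refine Or.inl ⟨k, ⟨h3, h1, h2⟩, ?_⟩
        rcases hcase with ⟨rfl, rfl⟩ | ⟨rfl, rfl⟩
        · rfl
        · exact Sym2.eq_swap
      · refine Or.inr ⟨k, ⟨h1, h2⟩, ?_⟩
        rcases hcase with ⟨rfl, rfl⟩ | ⟨rfl, rfl⟩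
        · rfl
        · exact Sym2.eq_swap
    · rintro (⟨k, ⟨hk3, hk1, hk2⟩, rfl⟩ | ⟨k, ⟨hk1, hk2⟩, rfl⟩)
      · refine ⟨_, _, rfl, ⟨a, k, ha, hk1, hk2, Or.inl rfl⟩, ?_, by abel⟩
        rcases lt_or_gt_of_ne hk3 with hlt | hgt
        · exact ⟨k, b, by omega, hlt, hbn, Or.inr rfl⟩
        · exact ⟨b, k, by omega, hgt, hk2, Or.inr (add_comm _ _)⟩
      · exact ⟨_, _, rfl, ⟨b, k, by omega, hk1, hk2, Or.inl rfl⟩,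
          ⟨a, k, ha, by omega, hk2, Or.inr rfl⟩, by abel⟩
  rw [hset, Set.ncard_coe_finset]
  rw [Finset.card_union_of_disjoint, Finset.card_image_of_injOn,
    Finset.card_image_of_injOn, Finset.card_erase_of_mem (by simp [Finset.mem_Ioc]; omega),
    Nat.card_Ioc, Nat.card_Ioc]
  · -- injOn for second image
    intro k hk k' hk' h
    simp only [Finset.coe_Ioc, Set.mem_Ioc] at hk hk'
    rw [Sym2.eq_iff] at h
    rcases h with ⟨h1, -⟩ | ⟨h1, -⟩
    · have := congrFun h1 k
      simp only [Pi.sub_apply, Pi.add_apply, epsD_apply] at this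
      split_ifs at this <;> omega
    · have := congrFun h1 k'
      simp only [Pi.sub_apply, Pi.add_apply, epsD_apply] at this
      split_ifs at this <;> omega
  · -- injOn for first image
    intro k hk k' hk' h
    simp only [Finset.coe_erase, Set.mem_diff, Finset.coe_Ioc, Set.mem_Ioc,
      Set.mem_singleton_iff] at hk hk'
    rw [Sym2.eq_iff] at h
    rcases h with ⟨h1, -⟩ | ⟨h1, -⟩
    · have := congrFun h1 k
      simp only [Pi.sub_apply, Pi.add_apply, epsD_apply] at this
      split_ifs at this <;> omega
    · have := congrFun h1 b
      simp only [Pi.sub_apply, Pi.add_apply, epsD_apply] at this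
      split_ifs at this <;> omega
  · -- disjoint
    rw [Finset.disjoint_left]
    rintro P hP1 hP2
    simp only [Finset.mem_image, Finset.mem_erase, Finset.mem_Ioc] at hP1 hP2
    obtain ⟨k, ⟨hk3, hk1, hk2⟩, rfl⟩ := hP1
    obtain ⟨k', ⟨hk1', hk2'⟩, hEq⟩ := hP2
    rw [Sym2.eq_iff] at hEq
    rcases hEq with ⟨h1, -⟩ | ⟨-, h1⟩
    · have := congrFun h1 a
      simp only [Pi.sub_apply, Pi.add_apply, epsD_apply] at this
      split_ifs at this <;> omega
    · have := congrFun h1 k'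
      simp only [Pi.sub_apply, Pi.add_apply, epsD_apply] at this
      split_ifs at this <;> omega

lemma coeff_master {n : ℕ} (hn : 4 ≤ n) (γ : ℕ → ℤ) (c : ℕ → ℕ)
    (hc : γ = ∑ i ∈ Finset.Icc 1 n, (c i : ℤ) • alphaD n i) :
    ∀ t, 1 ≤ t → t ≤ n →
      γ t = (if t ≤ n - 1 then (c t : ℤ) else 0) - (if 2 ≤ t then (c (t-1) : ℤ) else 0)
            + (if t = n - 1 then (c n : ℤ) else 0) + (if t = n then (c n : ℤ) else 0) := by
  intro t ht1 htn
  have h := congrFun hc t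
  rw [Finset.sum_apply] at h
  have hsplit : Finset.Icc 1 n = insert n (Finset.Icc 1 (n-1)) := by
    ext x; simp only [Finset.mem_Icc, Finset.mem_insert]; omega
  rw [hsplit, Finset.sum_insert (by simp only [Finset.mem_Icc]; omega)] at h
  have hterm : ((c n : ℤ) • alphaD n n) t
      = (c n : ℤ) * ((if t = n-1 then 1 else 0) + (if t = n then 1 else 0)) := by
    simp [alphaD, epsD_apply]
  rw [hterm] at h
  have hsum : ∀ i ∈ Finset.Icc 1 (n-1), ((c i : ℤ) • alphaD n i) t
      = (if t = i then (c i : ℤ) else 0) - (if t = i + 1 then (c i : ℤ) else 0) := by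
    intro i hi
    simp only [Finset.mem_Icc] at hi
    have : i ≠ n := by omega
    simp [alphaD, this, epsD_apply, mul_sub, mul_ite]
  rw [Finset.sum_congr rfl hsum, Finset.sum_sub_distrib] at h
  rw [Finset.sum_ite_eq (Finset.Icc 1 (n-1)) t (fun i => (c i : ℤ))] at h
  obtain ⟨s, rfl⟩ : ∃ s, t = s + 1 := ⟨t - 1, by omega⟩
  have hre : ∀ i, (s + 1 = i + 1) = (s = i) := by
    intro i; simp
  simp only [hre] at h
  rw [Finset.sum_ite_eq (Finset.Icc 1 (n-1)) s (fun i => (c i : ℤ))] at h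
  simp only [Finset.mem_Icc] at h
  rw [h]
  have h1 : (s + 1 ∈ Finset.Icc 1 (n-1)) = (s + 1 ≤ n - 1) := by
    simp only [Finset.mem_Icc]; simp only [eq_iff_iff]; omega
  split_ifs with h1 h2 h3 h4 h5 h6 h7 h8 h9 h10 h11 h12 h13 h14 <;>
    simp only [Nat.add_sub_cancel, Finset.mem_Icc] at * <;> omega

set_option maxHeartbeats 1000000 in
lemma coeff_minus {n a b : ℕ} (hn : 4 ≤ n) (ha : 1 ≤ a) (hab : a < b) (hbn : b ≤ n)
    (c : ℕ → ℕ)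
    (hc : epsD a - epsD b = ∑ i ∈ Finset.Icc 1 n, (c i : ℤ) • alphaD n i) :
    ∀ t, 1 ≤ t → t ≤ n → (c t : ℤ) = if a ≤ t ∧ t < b then 1 else 0 := by
  have M := coeff_master hn _ c hc
  simp only [Pi.sub_apply, epsD_apply] at M
  have claim : ∀ t, t ≤ n - 2 → 1 ≤ t → (c t : ℤ) = if a ≤ t ∧ t < b then 1 else 0 := by
    intro t
    induction t using Nat.strong_induction_on with
    | _ t ih =>
      intro ht2 ht1
      have M1 := M t ht1 (by omega)
      rw [if_pos (show t ≤ n-1 by omega), if_neg (show ¬(t = n-1) by omega),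
        if_neg (show ¬(t = n) by omega)] at M1
      by_cases h2 : 2 ≤ t
      · have ihp := ih (t-1) (by omega) (by omega) (by omega)
        split_ifs at M1 ihp ⊢ <;> omega
      · split_ifs at M1 ⊢ <;> omega
  have E1 : (if n-1 = a then (1:ℤ) else 0) - (if n-1 = b then 1 else 0)
      = (c (n-1) : ℤ) - (c (n-2) : ℤ) + (c n : ℤ) := by
    have h := M (n-1) (by omega) (by omega)
    rw [show n - 1 - 1 = n - 2 from by omega] at h
    rw [if_pos (le_refl (n-1)), if_pos (show 2 ≤ n-1 by omega), if_pos rfl,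
      if_neg (show ¬(n-1 = n) by omega)] at h
    linarith [h]
  have E2 : (if n = a then (1:ℤ) else 0) - (if n = b then 1 else 0)
      = -(c (n-1) : ℤ) + (c n : ℤ) := by
    have h := M n (by omega) (by omega)
    rw [if_neg (show ¬(n ≤ n-1) by omega), if_pos (show 2 ≤ n by omega),
      if_neg (show ¬(n = n-1) by omega), if_pos rfl] at h
    rw [show n - 1 = n - 1 from rfl] at h
    linarith [h]
  have C := claim (n-2) (le_refl _) (by omega)
  intro t ht1 htn
  by_cases htop : t ≤ n - 2
  · exact claim t htop ht1
  · have ht : t = n - 1 ∨ t = n := by omega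
    rcases ht with rfl | rfl <;> split_ifs at E1 E2 C ⊢ <;> omega

set_option maxHeartbeats 1000000 in
lemma coeff_plus {n a b : ℕ} (hn : 4 ≤ n) (ha : 1 ≤ a) (hab : a < b) (hbn : b ≤ n)
    (c : ℕ → ℕ)
    (hc : epsD a + epsD b = ∑ i ∈ Finset.Icc 1 n, (c i : ℤ) • alphaD n i) :
    ∀ t, 1 ≤ t → t ≤ n → (c t : ℤ) =
      if t = n then 1
      else if t = n - 1 then (if b ≤ n - 1 then 1 else 0)
      else (if a ≤ t then 1 else 0) + (if b ≤ t then 1 else 0) := by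
  have M := coeff_master hn _ c hc
  simp only [Pi.add_apply, epsD_apply] at M
  have claim : ∀ t, t ≤ n - 2 → 1 ≤ t →
      (c t : ℤ) = (if a ≤ t then 1 else 0) + (if b ≤ t then 1 else 0) := by
    intro t
    induction t using Nat.strong_induction_on with
    | _ t ih =>
      intro ht2 ht1
      have M1 := M t ht1 (by omega)
      rw [if_pos (show t ≤ n-1 by omega), if_neg (show ¬(t = n-1) by omega),
        if_neg (show ¬(t = n) by omega)] at M1
      by_cases h2 : 2 ≤ t
      · have ihp := ih (t-1) (by omega) (by omega) (by omega)
        split_ifs at M1 ihp ⊢ <;> omega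
      · split_ifs at M1 ⊢ <;> omega
  have E1 : (if n-1 = a then (1:ℤ) else 0) + (if n-1 = b then 1 else 0)
      = (c (n-1) : ℤ) - (c (n-2) : ℤ) + (c n : ℤ) := by
    have h := M (n-1) (by omega) (by omega)
    rw [show n - 1 - 1 = n - 2 from by omega] at h
    rw [if_pos (le_refl (n-1)), if_pos (show 2 ≤ n-1 by omega), if_pos rfl,
      if_neg (show ¬(n-1 = n) by omega)] at h
    linarith [h]
  have E2 : (if n = a then (1:ℤ) else 0) + (if n = b then 1 else 0)
      = -(c (n-1) : ℤ) + (c n : ℤ) := by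
    have h := M n (by omega) (by omega)
    rw [if_neg (show ¬(n ≤ n-1) by omega), if_pos (show 2 ≤ n by omega),
      if_neg (show ¬(n = n-1) by omega), if_pos rfl] at h
    linarith [h]
  have C := claim (n-2) (le_refl _) (by omega)
  intro t ht1 htn
  by_cases htop : t ≤ n - 2
  · have := claim t htop ht1
    split_ifs at this ⊢ <;> omega
  · have ht : t = n - 1 ∨ t = n := by omega
    rcases ht with rfl | rfl <;> split_ifs at E1 E2 C ⊢ <;> omega


set_option maxHeartbeats 1000000 in
/-- for a non-simple positive root `γ = Σ n_i α_i` of type `D_n`,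
the number of unordered pairs `{α, β}` of positive roots with `α + β = γ`
equals `|Supp_{≥1}(γ)| - 1 + |Supp_{≥2}(γ)|`, where `Supp_{≥k}(γ) = { i : n_i ≥ k }`. -/
theorem stmt5 (n : ℕ) (hn : 4 ≤ n) (γ : ℕ → ℤ) (hγ : IsPosRootD n γ)
    (hns : ∀ i, γ ≠ alphaD n i)
    (c : ℕ → ℕ) (hc : γ = ∑ i ∈ Finset.Icc 1 n, (c i : ℤ) • alphaD n i) :
    {p : Sym2 (ℕ → ℤ) | ∃ α β : ℕ → ℤ, p = s(α, β) ∧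
        IsPosRootD n α ∧ IsPosRootD n β ∧ α + β = γ}.ncard
      = (((Finset.Icc 1 n).filter (fun i => 1 ≤ c i)).card - 1)
        + ((Finset.Icc 1 n).filter (fun i => 2 ≤ c i)).card := by
  obtain ⟨a, b, ha, hab, hbn, hform⟩ := hγ
  rcases hform with rfl | rfl
  · -- γ = ε_a - ε_b
    rw [count_minus ha hab hbn]
    have hv := coeff_minus hn ha hab hbn c hc
    have h1 : (Finset.Icc 1 n).filter (fun i => 1 ≤ c i) = Finset.Icc a (b-1) := by
      ext i
      simp only [Finset.mem_filter, Finset.mem_Icc]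
      constructor
      · rintro ⟨⟨hi1, hi2⟩, hci⟩
        have := hv i hi1 hi2
        split_ifs at this <;> omega
      · rintro ⟨hi1, hi2⟩
        have := hv i (by omega) (by omega)
        split_ifs at this <;> omega
    have h2 : (Finset.Icc 1 n).filter (fun i => 2 ≤ c i) = ∅ := by
      ext i
      simp only [Finset.mem_filter, Finset.mem_Icc, Finset.notMem_empty, iff_false]
      rintro ⟨⟨hi1, hi2⟩, hci⟩
      have := hv i hi1 hi2
      split_ifs at this <;> omega
    rw [h1, h2, Nat.card_Icc, Finset.card_empty]
    omega
  · -- γ = ε_a + ε_b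
    rw [count_plus ha hab hbn]
    have hv := coeff_plus hn ha hab hbn c hc
    by_cases hb : b = n
    · subst hb
      have h1 : (Finset.Icc 1 b).filter (fun i => 1 ≤ c i)
          = insert b (Finset.Icc a (b-2)) := by
        ext i
        simp only [Finset.mem_filter, Finset.mem_Icc, Finset.mem_insert]
        constructor
        · rintro ⟨⟨hi1, hi2⟩, hci⟩
          have := hv i hi1 hi2
          split_ifs at this <;> omega
        · rintro (rfl | ⟨hi1, hi2⟩)
          · have := hv i (by omega) (by omega)
            split_ifs at this <;> omega
          · have := hv i (by omega) (by omega)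
            split_ifs at this <;> omega
      have h2 : (Finset.Icc 1 b).filter (fun i => 2 ≤ c i) = ∅ := by
        ext i
        simp only [Finset.mem_filter, Finset.mem_Icc, Finset.notMem_empty, iff_false]
        rintro ⟨⟨hi1, hi2⟩, hci⟩
        have := hv i hi1 hi2
        split_ifs at this <;> omega
      rw [h1, h2, Finset.card_insert_of_notMem (by simp only [Finset.mem_Icc]; omega),
        Nat.card_Icc, Finset.card_empty]
      omega
    · have h1 : (Finset.Icc 1 n).filter (fun i => 1 ≤ c i) = Finset.Icc a n := by
        ext i
        simp only [Finset.mem_filter, Finset.mem_Icc]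
        constructor
        · rintro ⟨⟨hi1, hi2⟩, hci⟩
          have := hv i hi1 hi2
          split_ifs at this <;> omega
        · rintro ⟨hi1, hi2⟩
          have := hv i (by omega) (by omega)
          split_ifs at this <;> omega
      have h2 : (Finset.Icc 1 n).filter (fun i => 2 ≤ c i) = Finset.Icc b (n-2) := by
        ext i
        simp only [Finset.mem_filter, Finset.mem_Icc]
        constructor
        · rintro ⟨⟨hi1, hi2⟩, hci⟩
          have := hv i hi1 hi2
          split_ifs at this <;> omega
        · rintro ⟨hi1, hi2⟩
          have := hv i (by omega) (by omega)
          split_ifs at this <;> omega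
      rw [h1, h2, Nat.card_Icc, Nat.card_Icc]
      omega
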